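/- arXiv:1412.0561 — 3 statements merged into one kernel-verified Lean document; each statement's English description precedes it below -/
import Mathlib

section
/- For every x ∈ 𝒳 and every α ∈ [0,1), if U is uniformly distributed on (0,1), then Pr_U(p(x,U) ≤ α) = φ(x;α); that is, the Lebesgue measure of {u ∈ (0,1) : p(x,u) ≤ α} equals φ(x;α). -/
open MeasureTheory Set

/-- Theorem 1 of the paper: for a test function `φ(x;·)` that is nondecreasing and
right-continuous on `[0,1]`, with p-value `p(x,u) = inf{α ∈ [0,1] : u ≤ φ(x;α)}`
(infimum of the empty set being 1), the Lebesgue measure of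
`{u ∈ (0,1) : p(x,u) ≤ α}` equals `φ(x;α)` for every `α ∈ [0,1)`. -/
theorem stmt0 {𝒳 : Type*} [Countable 𝒳]
    (φ : 𝒳 → ℝ → ℝ)
    (hφ01 : ∀ x, ∀ α ∈ Icc (0:ℝ) 1, φ x α ∈ Icc (0:ℝ) 1)
    (hmono : ∀ x, MonotoneOn (φ x) (Icc (0:ℝ) 1))
    (hrc : ∀ x, ∀ α ∈ Ico (0:ℝ) 1, ContinuousWithinAt (φ x) (Ici α) α)
    (p : 𝒳 → ℝ → ℝ)
    (hp : ∀ x u, p x u = sInf (insert 1 {α ∈ Icc (0:ℝ) 1 | u ≤ φ x α}))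
    (x : 𝒳) (α : ℝ) (hα : α ∈ Ico (0:ℝ) 1) :
    volume {u ∈ Ioo (0:ℝ) 1 | p x u ≤ α} = ENNReal.ofReal (φ x α) := by
  have hαI : α ∈ Icc (0:ℝ) 1 := ⟨hα.1, hα.2.le⟩
  have hc01 : φ x α ∈ Icc (0:ℝ) 1 := hφ01 x α hαI
  have key : ∀ u ∈ Ioo (0:ℝ) 1, (p x u ≤ α ↔ u ≤ φ x α) := by
    intro u hu
    rw [hp]
    set S := {β ∈ Icc (0:ℝ) 1 | u ≤ φ x β} with hS
    have hbdd : BddBelow (insert 1 S) := by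
      refine ⟨0, ?_⟩
      rintro t (rfl | ht)
      · norm_num
      · exact ht.1.1
    constructor
    · intro h
      have hub : ∀ β ∈ Ioo α 1, u ≤ φ x β := by
        intro β hβ
        obtain ⟨t, ht, htβ⟩ :=
          exists_lt_of_csInf_lt ⟨1, mem_insert _ _⟩ (lt_of_le_of_lt h hβ.1)
        rcases ht with rfl | ht
        · exact absurd htβ (not_lt.2 hβ.2.le)
        · exact ht.2.trans
            (hmono x ht.1 ⟨hα.1.trans hβ.1.le, hβ.2.le⟩ htβ.le)
      have htend : Filter.Tendsto (φ x) (nhdsWithin α (Ioi α)) (nhds (φ x α)) :=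
        (hrc x α hα).mono_left (nhdsWithin_mono _ Ioi_subset_Ici_self)
      have hev : ∀ᶠ β in nhdsWithin α (Ioi α), u ≤ φ x β := by
        filter_upwards [Ioo_mem_nhdsGT_of_mem ⟨le_refl α, hα.2⟩] with β hβ
        exact hub β hβ
      exact ge_of_tendsto htend hev
    · intro h
      exact csInf_le hbdd (mem_insert_of_mem _ ⟨hαI, h⟩)
  have hset : {u ∈ Ioo (0:ℝ) 1 | p x u ≤ α} = Ioo 0 1 ∩ Iic (φ x α) := by
    ext u
    simp only [mem_setOf_eq, mem_inter_iff, mem_Iic]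
    exact ⟨fun h => ⟨h.1, (key u h.1).1 h.2⟩, fun h => ⟨h.1, (key u h.1).2 h.2⟩⟩
  rw [hset]
  rcases lt_or_eq_of_le hc01.2 with hlt | heq
  · have : Ioo (0:ℝ) 1 ∩ Iic (φ x α) = Ioc 0 (φ x α) := by
      ext u
      simp only [mem_inter_iff, mem_Ioo, mem_Iic, mem_Ioc]
      exact ⟨fun h => ⟨h.1.1, h.2⟩, fun h => ⟨⟨h.1, lt_of_le_of_lt h.2 hlt⟩, h.2⟩⟩
    rw [this, Real.volume_Ioc, sub_zero]
  · have : Ioo (0:ℝ) 1 ∩ Iic (φ x α) = Ioo 0 1 := by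
      rw [inter_eq_left]
      intro u hu
      rw [mem_Iic, heq]
      exact hu.2.le
    rw [this, Real.volume_Ioo, ← heq]
    norm_num
end

section
/- Let X be a random variable with values in ℤ with law Q, and let U be an independent uniform(0,1) random variable. Define the randomized p-value p*(X,U) = Q({y : y > X}) + U·Q({X}). Then p*(X,U) is uniformly distributed: for every t ∈ [0,1], Pr(p*(X,U) ≤ t) = t. -/
open MeasureTheory Set Filter

lemma vol_Iic_inter99 (c : ℝ) :
    (volume : Measure ℝ) (Iic c ∩ Ioo (0:ℝ) 1) = ENNReal.ofReal (min c 1) := by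
  apply le_antisymm
  · calc volume (Iic c ∩ Ioo (0:ℝ) 1) ≤ volume (Ioc (0:ℝ) (min c 1)) := by
          apply measure_mono
          rintro u ⟨hu1, hu2, hu3⟩
          exact ⟨hu2, le_min hu1 hu3.le⟩
      _ = ENNReal.ofReal (min c 1) := by rw [Real.volume_Ioc, sub_zero]
  · calc ENNReal.ofReal (min c 1) = volume (Ioo (0:ℝ) (min c 1)) := by
          rw [Real.volume_Ioo, sub_zero]
      _ ≤ volume (Iic c ∩ Ioo (0:ℝ) 1) := by
          apply measure_mono
          rintro u ⟨hu1, hu2⟩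
          exact ⟨le_of_lt (lt_of_lt_of_le hu2 (min_le_left _ _)),
            hu1, lt_of_lt_of_le hu2 (min_le_right _ _)⟩

lemma slice99 (t a q : ℝ) (hq : 0 ≤ q) :
    ENNReal.ofReal q * (volume.restrict (Ioo (0:ℝ) 1)) {u | a + u * q ≤ t}
      = ENNReal.ofReal (min t (a + q) - min t a) := by
  rcases eq_or_lt_of_le hq with h0 | h0
  · simp [← h0]
  · have hS : {u : ℝ | a + u * q ≤ t} = Iic ((t - a) / q) := by
      ext u
      simp only [mem_setOf_eq, mem_Iic, le_div_iff₀ h0]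
      constructor <;> intro h <;> linarith
    rw [hS, Measure.restrict_apply measurableSet_Iic, vol_Iic_inter99,
      ← ENNReal.ofReal_mul hq]
    rcases le_total t a with h | h
    · have h1 : min t (a + q) = t := min_eq_left (by linarith)
      have h2 : min t a = t := min_eq_left h
      have h3 : q * min ((t - a) / q) 1 ≤ 0 := by
        apply mul_nonpos_of_nonneg_of_nonpos hq
        exact le_trans (min_le_left _ _)
          (div_nonpos_of_nonpos_of_nonneg (by linarith) hq)
      rw [h1, h2, sub_self, ENNReal.ofReal_zero]
      exact ENNReal.ofReal_eq_zero.2 h3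
    · have h2 : min t a = a := min_eq_right h
      congr 1
      have h1 : (1:ℝ) = q / q := (div_self h0.ne').symm
      rw [h2, h1, min_div_div_right hq, mul_div_cancel₀ _ h0.ne']
      have := min_sub_sub_right t (a + q) a
      simp only [add_sub_cancel_left] at this
      linarith [this]

set_option maxHeartbeats 1000000 in
/-- If `X` has law `Q` on ℤ and `U` is an independent uniform(0,1) random variable,
then the randomized p-value `p*(X,U) = Q({y : y > X}) + U·Q({X})` is uniformly
distributed: `Pr(p*(X,U) ≤ t) = t` for every `t ∈ [0,1]`. -/
theorem stmt9 {Ω : Type*} [MeasurableSpace Ω] (P : Measure Ω) [IsProbabilityMeasure P]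
    (X : Ω → ℤ) (U : Ω → ℝ) (hX : Measurable X) (hU : Measurable U)
    (Q : Measure ℤ) [IsProbabilityMeasure Q] (hXlaw : P.map X = Q)
    (hUlaw : P.map U = volume.restrict (Ioo (0:ℝ) 1))
    (hindep : ProbabilityTheory.IndepFun X U P)
    (t : ℝ) (ht : t ∈ Icc (0:ℝ) 1) :
    P {ω | (Q {y | X ω < y}).toReal + U ω * (Q {X ω}).toReal ≤ t} =
      ENNReal.ofReal t := by
  obtain ⟨ht0, ht1⟩ := ht
  set μU : Measure ℝ := volume.restrict (Ioo (0:ℝ) 1) with hμU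
  -- real-valued tail function
  set m : ℤ → ℝ := fun x => min t ((Q {y | x < y}).toReal) with hm
  have hfin : ∀ s : Set ℤ, Q s ≠ ⊤ := fun s => measure_ne_top Q s
  have hmono : Antitone m := by
    intro x x' hxx
    exact min_le_min le_rfl (ENNReal.toReal_le_toReal (hfin _) (hfin _) |>.mpr
      (measure_mono (fun y hy => lt_of_le_of_lt hxx hy)))
  have hstep : ∀ x : ℤ, (Q {y | x - 1 < y}).toReal
      = (Q {y | x < y}).toReal + (Q {x}).toReal := by
    intro x
    have hset : {y : ℤ | x - 1 < y} = {x} ∪ {y | x < y} := by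
      ext y; simp only [mem_setOf_eq, mem_union, mem_singleton_iff]; omega
    have hdisj : Disjoint ({x} : Set ℤ) {y | x < y} := by
      rw [Set.disjoint_left]; rintro y rfl; simp
    rw [hset, measure_union hdisj MeasurableSpace.measurableSet_top,
      ENNReal.toReal_add (hfin _) (hfin _)]
    ring
  -- limits
  have htop : Tendsto (fun n : ℕ => (Q {y : ℤ | (n:ℤ) - 1 < y}).toReal) atTop (nhds 0) := by
    have h1 : Tendsto (fun n : ℕ => Q {y : ℤ | (n:ℤ) - 1 < y}) atTop (nhds 0) := by
      have := MeasureTheory.tendsto_measure_iInter_atTop (μ := Q)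
        (s := fun n : ℕ => {y : ℤ | (n:ℤ) - 1 < y})
        (fun n => MeasurableSpace.measurableSet_top.nullMeasurableSet)
        (fun n n' h y hy => by simp only [mem_setOf_eq] at *; omega)
        ⟨0, hfin _⟩
      have hI : (⋂ n : ℕ, {y : ℤ | (n:ℤ) - 1 < y}) = ∅ := by
        ext y
        simp only [mem_iInter, mem_setOf_eq, mem_empty_iff_false, iff_false, not_forall, not_lt]
        exact ⟨(y + 1).toNat, by have := Int.self_le_toNat (y + 1); omega⟩
      rwa [hI, measure_empty] at this
    have := (ENNReal.tendsto_toReal (a := 0) (by simp)).comp h1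
    simpa [Function.comp_def] using this
  have hbot : Tendsto (fun n : ℕ => (Q {y : ℤ | -(n:ℤ) - 1 < y}).toReal) atTop (nhds 1) := by
    have h1 : Tendsto (fun n : ℕ => Q {y : ℤ | -(n:ℤ) - 1 < y}) atTop (nhds 1) := by
      have := MeasureTheory.tendsto_measure_iUnion_atTop (μ := Q)
        (s := fun n : ℕ => {y : ℤ | -(n:ℤ) - 1 < y})
        (fun n n' h y hy => by simp only [mem_setOf_eq] at *; omega)
      have hI : (⋃ n : ℕ, {y : ℤ | -(n:ℤ) - 1 < y}) = univ := by
        ext y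
        simp only [mem_iUnion, mem_setOf_eq, mem_univ, iff_true]
        exact ⟨(-y).toNat, by have := Int.self_le_toNat (-y); omega⟩
      rwa [hI, measure_univ] at this
    have := (ENNReal.tendsto_toReal (a := 1) (by simp)).comp h1
    simpa [Function.comp_def] using this
  -- HasSum of the telescoping series
  have hnn : ∀ x : ℤ, 0 ≤ m (x - 1) - m x :=
    fun x => sub_nonneg.2 (hmono (by omega))
  have hsum : HasSum (fun x : ℤ => m (x - 1) - m x) t := by
    have hpos : HasSum (fun n : ℕ => m ((n:ℤ) - 1) - m (n:ℤ)) (m (-1)) := by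
      rw [hasSum_iff_tendsto_nat_of_nonneg (fun n => hnn _)]
      have heq : ∀ n : ℕ, ∑ i ∈ Finset.range n, (m ((i:ℤ) - 1) - m (i:ℤ))
          = m (-1) - m ((n:ℤ) - 1) := by
        intro n
        have h := Finset.sum_range_sub' (fun i : ℕ => m ((i:ℤ) - 1)) n
        calc ∑ i ∈ Finset.range n, (m ((i:ℤ) - 1) - m (i:ℤ))
            = ∑ i ∈ Finset.range n, (m ((i:ℤ) - 1) - m ((↑(i+1):ℤ) - 1)) := by
              apply Finset.sum_congr rfl
              intro i _
              congr 2
              push_cast; ring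
          _ = m (((0:ℕ):ℤ) - 1) - m ((n:ℤ) - 1) := h
          _ = m (-1) - m ((n:ℤ) - 1) := by norm_num
      simp only [heq]
      have hmt : Tendsto (fun n : ℕ => m ((n:ℤ) - 1)) atTop (nhds 0) := by
        have : Tendsto (fun n : ℕ => min t ((Q {y : ℤ | (n:ℤ) - 1 < y}).toReal))
            atTop (nhds (min t 0)) := tendsto_const_nhds.min htop
        rwa [min_eq_right ht0] at this
      have := Tendsto.sub
        (tendsto_const_nhds : Tendsto (fun _ : ℕ => m (-1)) atTop (nhds (m (-1)))) hmt
      simpa using this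
    have hneg : HasSum (fun n : ℕ => m ((-(↑n + 1) : ℤ) - 1) - m (-(↑n + 1) : ℤ))
        (t - m (-1)) := by
      rw [hasSum_iff_tendsto_nat_of_nonneg (fun n => hnn _)]
      have heq : ∀ n : ℕ, ∑ i ∈ Finset.range n,
          (m ((-(↑i + 1) : ℤ) - 1) - m (-(↑i + 1) : ℤ))
          = m (-(n:ℤ) - 1) - m (-1) := by
        intro n
        have h := Finset.sum_range_sub (fun i : ℕ => m (-(i:ℤ) - 1)) n
        calc ∑ i ∈ Finset.range n, (m ((-(↑i + 1) : ℤ) - 1) - m (-(↑i + 1) : ℤ))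
            = ∑ i ∈ Finset.range n, (m (-(↑(i+1):ℤ) - 1) - m (-(i:ℤ) - 1)) := by
              apply Finset.sum_congr rfl
              intro i _
              congr 2 <;> push_cast <;> ring
          _ = m (-(n:ℤ) - 1) - m (-((0:ℕ):ℤ) - 1) := h
          _ = m (-(n:ℤ) - 1) - m (-1) := by norm_num
      simp only [heq]
      have hmt : Tendsto (fun n : ℕ => m (-(n:ℤ) - 1)) atTop (nhds t) := by
        have : Tendsto (fun n : ℕ => min t ((Q {y : ℤ | -(n:ℤ) - 1 < y}).toReal))
            atTop (nhds (min t 1)) := tendsto_const_nhds.min hbot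
        rwa [min_eq_left ht1] at this
      have := Tendsto.sub hmt
        (tendsto_const_nhds : Tendsto (fun _ : ℕ => m (-1)) atTop (nhds (m (-1))))
      simpa using this
    have h := HasSum.of_nat_of_neg_add_one (f := fun x : ℤ => m (x - 1) - m x) hpos hneg
    have h2 : m (-1) + (t - m (-1)) = t := by ring
    rwa [h2] at h
  -- joint law
  have hmap : P.map (fun ω => (X ω, U ω)) = Q.prod μU := by
    rw [(ProbabilityTheory.indepFun_iff_map_prod_eq_prod_map_map
      hX.aemeasurable hU.aemeasurable).mp hindep, hXlaw, hUlaw]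
  -- the event as a preimage
  set s : Set (ℤ × ℝ) :=
    {p : ℤ × ℝ | (Q {y | p.1 < y}).toReal + p.2 * (Q {p.1}).toReal ≤ t} with hs
  have hsm : MeasurableSet s := by
    have hf : Measurable (fun p : ℤ × ℝ =>
        (Q {y | p.1 < y}).toReal + p.2 * (Q {p.1}).toReal) := by
      apply Measurable.add
      · exact (measurable_from_top (f := fun x : ℤ => (Q {y | x < y}).toReal)).comp measurable_fst
      · exact measurable_snd.mul
          ((measurable_from_top (f := fun x : ℤ => (Q {x}).toReal)).comp measurable_fst)
    exact hf measurableSet_Iic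
  have hev : {ω | (Q {y | X ω < y}).toReal + U ω * (Q {X ω}).toReal ≤ t}
      = (fun ω => (X ω, U ω)) ⁻¹' s := rfl
  rw [hev, ← Measure.map_apply (hX.prodMk hU) hsm, hmap,
    Measure.prod_apply hsm, lintegral_countable']
  have hterm : ∀ x : ℤ, μU (Prod.mk x ⁻¹' s) * Q {x}
      = ENNReal.ofReal (m (x - 1) - m x) := by
    intro x
    have hpre : Prod.mk x ⁻¹' s
        = {u : ℝ | (Q {y | x < y}).toReal + u * (Q {x}).toReal ≤ t} := rfl
    calc μU (Prod.mk x ⁻¹' s) * Q {x}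
        = ENNReal.ofReal ((Q {x}).toReal) * (volume.restrict (Ioo (0:ℝ) 1))
            {u : ℝ | (Q {y | x < y}).toReal + u * (Q {x}).toReal ≤ t} := by
          rw [hpre, hμU, mul_comm, ENNReal.ofReal_toReal (hfin {x})]
      _ = ENNReal.ofReal (min t ((Q {y | x < y}).toReal + (Q {x}).toReal)
            - min t ((Q {y | x < y}).toReal)) :=
          slice99 t _ _ ENNReal.toReal_nonneg
      _ = ENNReal.ofReal (m (x - 1) - m x) := by
          rw [← hstep x]
  simp only [hterm]
  rw [← ENNReal.ofReal_tsum_of_nonneg hnn hsum.summable, hsum.tsum_eq]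
end

section
/- Fix c > 0 and α with cα ∈ (0,1), and consider the single-step multiple testing procedure δ*_m(x_m,u_m;α) = 1 if p*_m(x_m,u_m) ≤ cα and 0 otherwise. Suppose k_m ∈ ℤ and γ_m ∈ (0,1) satisfy P⁰_m(X_m > k_m) + γ_m·P⁰_m(X_m = k_m) = cα with P⁰_m(X_m = k_m) > 0, and let φ*_m(x;α) = 1 if x > k_m, γ_m if x = k_m, 0 if x < k_m. Then for any distribution P of X_m with P(X_m = k_m) > 0: the map u_m ↦ E_{X_m}[δ*_m(X_m,u_m;α)] is nonincreasing on (0,1], and E_{X_m}[δ*_m(X_m,u_m;α)] > E_{X_m}[φ*_m(X_m;α)] if u_m ≤ γ_m while E_{X_m}[δ*_m(X_m,u_m;α)] < E_{X_m}[φ*_m(X_m;α)] if u_m > γ_m. -/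
open MeasureTheory Set

/-- Claim C6: fix `c > 0` and `α` with `cα ∈ (0,1)`, and consider the single-step
procedure `δ*_m(x,u;α) = 1{p*_m(x,u) ≤ cα}` with `p*_m(x,u) = P⁰_m(X_m > x) + u·P⁰_m(X_m = x)`.
If `k_m, γ_m` satisfy `P⁰_m(X_m > k_m) + γ_m·P⁰_m(X_m = k_m) = cα` with
`P⁰_m(X_m = k_m) > 0`, and `φ*_m` is the corresponding test function, then for any
distribution `P` with `P(X_m = k_m) > 0`: `u ↦ E_{X_m}[δ*_m(X_m,u;α)]` is nonincreasing
on `(0,1]`, and `E_{X_m}[δ*_m(X_m,u;α)] > E_{X_m}[φ*_m(X_m;α)]` if `u ≤ γ_m` while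
`E_{X_m}[δ*_m(X_m,u;α)] < E_{X_m}[φ*_m(X_m;α)]` if `u > γ_m`. -/
theorem stmt14 (P0 P : Measure ℤ) [IsProbabilityMeasure P0] [IsProbabilityMeasure P]
    (c α : ℝ) (hc : 0 < c) (hcα : c * α ∈ Ioo (0:ℝ) 1)
    (k : ℤ) (γ : ℝ) (hγ : γ ∈ Ioo (0:ℝ) 1)
    (hsize : (P0 {y | k < y}).toReal + γ * (P0 {k}).toReal = c * α)
    (hk0 : P0 {k} ≠ 0) (hkP : P {k} ≠ 0)
    (φ : ℤ → ℝ) (hφ : ∀ x, φ x = if k < x then 1 else if x = k then γ else 0)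
    (δ : ℤ → ℝ → ℝ)
    (hδ : ∀ x u, δ x u =
      if (P0 {y | x < y}).toReal + u * (P0 {x}).toReal ≤ c * α then 1 else 0) :
    AntitoneOn (fun u => ∫ x, δ x u ∂P) (Ioc (0:ℝ) 1) ∧
    ∀ u ∈ Ioc (0:ℝ) 1,
      (u ≤ γ → ∫ x, δ x u ∂P > ∫ x, φ x ∂P) ∧
      (γ < u → ∫ x, δ x u ∂P < ∫ x, φ x ∂P) := by
  have hAmeas : MeasurableSet {y : ℤ | k < y} := (Set.to_countable _).measurableSet
  have hkmeas : MeasurableSet ({k} : Set ℤ) := measurableSet_singleton k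
  have hfin0 : ∀ s : Set ℤ, P0 s ≠ ⊤ := fun s => measure_ne_top P0 s
  set A0 : ℝ := (P0 {y | k < y}).toReal with hA0
  set B0 : ℝ := (P0 {k}).toReal with hB0
  have hB0pos : 0 < B0 := ENNReal.toReal_pos hk0 (hfin0 _)
  have hA0lt : A0 < c * α := by
    have : 0 < γ * B0 := mul_pos hγ.1 hB0pos
    linarith [hsize]
  -- key integral computation
  have key : ∀ a b : ℝ,
      ∫ x, (Set.indicator {y : ℤ | k < y} (fun _ => a) x
        + Set.indicator ({k} : Set ℤ) (fun _ => b) x) ∂P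
      = (P {y | k < y}).toReal * a + (P {k}).toReal * b := by
    intro a b
    rw [integral_add ((integrable_const a).indicator hAmeas)
        ((integrable_const b).indicator hkmeas),
      integral_indicator_const _ hAmeas, integral_indicator_const _ hkmeas]
    simp [smul_eq_mul]
    rfl
  -- pointwise description of δ on (0,1]
  have hδeq : ∀ u ∈ Ioc (0:ℝ) 1, ∀ x : ℤ,
      δ x u = Set.indicator {y : ℤ | k < y} (fun _ => (1:ℝ)) x
        + Set.indicator ({k} : Set ℤ) (fun _ => if u ≤ γ then (1:ℝ) else 0) x := by
    intro u hu x
    rw [hδ]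
    rcases lt_trichotomy x k with hx | hx | hx
    · -- x < k : reject never
      have hsub : {y : ℤ | k < y} ∪ {k} ⊆ {y : ℤ | x < y} := by
        intro y hy
        rcases hy with hy | hy
        · exact lt_trans hx hy
        · simp only [mem_singleton_iff] at hy; exact hy ▸ hx
      have hdisj : Disjoint {y : ℤ | k < y} ({k} : Set ℤ) := by
        simp [Set.disjoint_singleton_right]
      have hmeas : P0 {y : ℤ | k < y} + P0 {k} ≤ P0 {y : ℤ | x < y} := by
        rw [← measure_union hdisj hkmeas]
        exact measure_mono hsub
      have hle : A0 + B0 ≤ (P0 {y : ℤ | x < y}).toReal := by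
        rw [hA0, hB0, ← ENNReal.toReal_add (hfin0 _) (hfin0 _)]
        exact ENNReal.toReal_mono (hfin0 _) hmeas
      have hnn : 0 ≤ u * (P0 {x}).toReal :=
        mul_nonneg (le_of_lt hu.1) ENNReal.toReal_nonneg
      have hnot : ¬ ((P0 {y | x < y}).toReal + u * (P0 {x}).toReal ≤ c * α) := by
        push_neg
        have : γ * B0 < B0 := by nlinarith [hγ.2, hB0pos]
        linarith [hsize]
      rw [if_neg hnot]
      have h1 : x ∉ {y : ℤ | k < y} := by simp; omega
      have h2 : x ∉ ({k} : Set ℤ) := by simp; omega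
      rw [Set.indicator_of_notMem h1, Set.indicator_of_notMem h2]
      ring
    · -- x = k
      subst hx
      have hcond : ((P0 {y | x < y}).toReal + u * (P0 {x}).toReal ≤ c * α) ↔ u ≤ γ := by
        rw [← hsize]
        constructor
        · intro h
          rw [← hA0, ← hB0] at h
          have : u * B0 ≤ γ * B0 := by linarith
          exact le_of_mul_le_mul_right (by simpa [mul_comm] using this) hB0pos
        · intro h
          have : u * B0 ≤ γ * B0 := mul_le_mul_of_nonneg_right h (le_of_lt hB0pos)
          rw [← hA0, ← hB0]; linarith
      have h1 : x ∉ {y : ℤ | x < y} := by simp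
      rw [Set.indicator_of_notMem h1, Set.indicator_of_mem (mem_singleton x)]
      by_cases h : u ≤ γ
      · rw [if_pos (hcond.mpr h), if_pos h]; ring
      · rw [if_neg (fun hh => h (hcond.mp hh)), if_neg h]; ring
    · -- k < x : reject always
      have hsub : {y : ℤ | x < y} ∪ {x} ⊆ {y : ℤ | k < y} := by
        intro y hy
        rcases hy with hy | hy
        · exact lt_trans hx hy
        · simp only [mem_singleton_iff] at hy; exact hy ▸ hx
      have hdisj : Disjoint {y : ℤ | x < y} ({x} : Set ℤ) := by
        simp [Set.disjoint_singleton_right]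
      have hmeas : P0 {y : ℤ | x < y} + P0 {x} ≤ P0 {y : ℤ | k < y} := by
        rw [← measure_union hdisj (measurableSet_singleton x)]
        exact measure_mono hsub
      have hle : (P0 {y : ℤ | x < y}).toReal + (P0 {x}).toReal ≤ A0 := by
        rw [hA0, ← ENNReal.toReal_add (hfin0 _) (hfin0 _)]
        exact ENNReal.toReal_mono (hfin0 _) hmeas
      have hu1 : u * (P0 {x}).toReal ≤ (P0 {x}).toReal := by
        nlinarith [ENNReal.toReal_nonneg (a := P0 {x}), hu.2]
      have hcond : (P0 {y | x < y}).toReal + u * (P0 {x}).toReal ≤ c * α := by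
        linarith
      rw [if_pos hcond]
      have h1 : x ∈ {y : ℤ | k < y} := hx
      have h2 : x ∉ ({k} : Set ℤ) := by simp; omega
      rw [Set.indicator_of_mem h1, Set.indicator_of_notMem h2]
      ring
    all_goals skip
  -- integral of δ
  have hδint : ∀ u ∈ Ioc (0:ℝ) 1,
      ∫ x, δ x u ∂P = (P {y | k < y}).toReal
        + (P {k}).toReal * (if u ≤ γ then (1:ℝ) else 0) := by
    intro u hu
    have := key 1 (if u ≤ γ then (1:ℝ) else 0)
    rw [show (fun x => δ x u) = (fun x =>
        Set.indicator {y : ℤ | k < y} (fun _ => (1:ℝ)) x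
        + Set.indicator ({k} : Set ℤ) (fun _ => if u ≤ γ then (1:ℝ) else 0) x) from
      funext (hδeq u hu)]
    rw [this]; ring
  -- integral of φ
  have hφint : ∫ x, φ x ∂P = (P {y | k < y}).toReal + (P {k}).toReal * γ := by
    have hφeq : φ = fun x =>
        Set.indicator {y : ℤ | k < y} (fun _ => (1:ℝ)) x
        + Set.indicator ({k} : Set ℤ) (fun _ => γ) x := by
      funext x
      rw [hφ]
      rcases lt_trichotomy x k with hx | hx | hx
      · have h1 : x ∉ {y : ℤ | k < y} := by simp; omega
        have h2 : x ∉ ({k} : Set ℤ) := by simp; omega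
        rw [Set.indicator_of_notMem h1, Set.indicator_of_notMem h2,
          if_neg (by omega), if_neg (by omega)]
        ring
      · subst hx
        have h1 : x ∉ {y : ℤ | x < y} := by simp
        rw [Set.indicator_of_notMem h1, Set.indicator_of_mem (mem_singleton x),
          if_neg (by omega), if_pos rfl]
        ring
      · have h2 : x ∉ ({k} : Set ℤ) := by simp; omega
        rw [Set.indicator_of_mem (show x ∈ {y : ℤ | k < y} from hx),
          Set.indicator_of_notMem h2, if_pos hx]
        ring
    rw [hφeq, key 1 γ]; ring
  have hBPpos : 0 < (P {k}).toReal := ENNReal.toReal_pos hkP (measure_ne_top P _)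
  constructor
  · intro u1 hu1 u2 hu2 h12
    dsimp only
    rw [hδint u1 hu1, hδint u2 hu2]
    have : (if u2 ≤ γ then (1:ℝ) else 0) ≤ (if u1 ≤ γ then (1:ℝ) else 0) := by
      by_cases h2 : u2 ≤ γ
      · rw [if_pos h2, if_pos (le_trans h12 h2)]
      · rw [if_neg h2]
        by_cases h1 : u1 ≤ γ <;> simp [h1]
    nlinarith
  · intro u hu
    rw [hδint u hu, hφint]
    constructor
    · intro h
      rw [if_pos h]
      nlinarith [hγ.2]
    · intro h
      rw [if_neg (not_le.mpr h)]
      nlinarith [hγ.1]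
end
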